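/- Let S consist of the unary signature Δ₀ together with the signatures g_k for all k ≥ 1, and let ⟨S⟩ be the tensor closure of S. If f is a signature with f ∉ ⟨S⟩, then there exists a signature g of arity at most 3 with g ∉ ⟨S⟩ such that g is obtained from f by successively pinning variables to constants (possibly zero pinnings, in which case g = f). -/

import Mathlib

/-- Number of `1`s (Hamming weight) of a Boolean string. -/
def wt1 {n : ℕ} (x : Fin n → Bool) : ℕ := (Finset.univ.filter fun i => x i = true).card

/-- The tensor product of two signatures: `(x,y) ↦ f(x)·g(y)`. -/
noncomputable def tensorSig {a b : ℕ} (f : (Fin a → Bool) → ℂ) (g : (Fin b → Bool) → ℂ) :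
    (Fin (a + b) → Bool) → ℂ :=
  fun x => f (fun i => x (Fin.castAdd b i)) * g (fun j => x (Fin.natAdd a j))

/-- Pinning the `i`-th variable of `f` to the constant `c`. -/
noncomputable def pinSig {n : ℕ} (f : (Fin (n + 1) → Bool) → ℂ) (i : Fin (n + 1)) (c : Bool) :
    (Fin n → Bool) → ℂ :=
  fun x => f (i.insertNth c x)

/-- Membership in `S = {Δ₀} ∪ {g_k : k ≥ 1}`: either the unary `Δ₀ = [1,0]`,
or the symmetric arity-`k` signature `g_k` (`k ≥ 1`) with value `2` at Hamming
weight `0`, value `1` at Hamming weight `1`, and value `0` at weight `≥ 2`. -/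
def InS {n : ℕ} (h : (Fin n → Bool) → ℂ) : Prop :=
  (n = 1 ∧ ∀ x, h x = if wt1 x = 0 then 1 else 0) ∨
  (1 ≤ n ∧ ∀ x, h x = if wt1 x = 0 then 2 else if wt1 x = 1 then 1 else 0)

/-- Tensor products of finitely many (at least one) members of `S`. -/
inductive TensorOfS : (m : ℕ) → ((Fin m → Bool) → ℂ) → Prop
  | atom {m : ℕ} {h : (Fin m → Bool) → ℂ} (hs : InS h) : TensorOfS m h
  | tensor {a b : ℕ} {f : (Fin a → Bool) → ℂ} {g : (Fin b → Bool) → ℂ}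
      (hf : TensorOfS a f) (hg : TensorOfS b g) : TensorOfS (a + b) (tensorSig f g)

/-- The tensor closure `⟨S⟩`: signatures that are identically `0` or equal, up
to a nonzero scalar and a permutation of the variables, to a tensor product of
finitely many members of `S`. -/
def InTC {n : ℕ} (f : (Fin n → Bool) → ℂ) : Prop :=
  (∀ x, f x = 0) ∨
  ∃ (c : ℂ), c ≠ 0 ∧ ∃ (σ : Equiv.Perm (Fin n)) (h : (Fin n → Bool) → ℂ),
    TensorOfS n h ∧ ∀ x, f x = c * h (x ∘ σ)

/-- `PinReach n f m g` : the arity-`m` signature `g` is obtained from the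
arity-`n` signature `f` by successively pinning variables to constants
(possibly zero pinnings, in which case `g = f`). -/
inductive PinReach : (n : ℕ) → ((Fin n → Bool) → ℂ) → (m : ℕ) → ((Fin m → Bool) → ℂ) → Prop
  | refl (n : ℕ) (f : (Fin n → Bool) → ℂ) : PinReach n f n f
  | pinStep {n : ℕ} {f : (Fin n → Bool) → ℂ} {m : ℕ} {g : (Fin (m + 1) → Bool) → ℂ}
      (h : PinReach n f (m + 1) g) (i : Fin (m + 1)) (c : Bool) :
      PinReach n f m (pinSig g i c)

-- auxiliary defs
def zeroVec (n : ℕ) : Fin n → Bool := fun _ => false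
def pairVec {n : ℕ} (i j : Fin n) : Fin n → Bool := fun k => decide (k = i) || decide (k = j)

def Ok {n : ℕ} (f : (Fin n → Bool) → ℂ) (x : Fin n → Bool) : Prop :=
  ∀ i j, x i = true → x j = true → f (pairVec i j) ≠ 0

open Classical in
noncomputable def Good {n : ℕ} (f : (Fin n → Bool) → ℂ) : Prop :=
  f (zeroVec n) ≠ 0 ∧
  (∀ x, f x = if Ok f x then f (zeroVec n) * (2:ℂ)⁻¹ ^ wt1 x else 0) ∧
  (∀ i j k : Fin n, i ≠ k → f (pairVec i i) ≠ 0 → f (pairVec j j) ≠ 0 → f (pairVec k k) ≠ 0 →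
    f (pairVec i j) = 0 → f (pairVec j k) = 0 → f (pairVec i k) = 0)

lemma pairVec_apply {n : ℕ} (i j k : Fin n) : pairVec i j k = true ↔ (k = i ∨ k = j) := by
  simp [pairVec]

lemma pairVec_comm {n : ℕ} (i j : Fin n) : pairVec i j = pairVec j i := by
  funext k; simp [pairVec, Bool.or_comm]

lemma wt1_sum {n : ℕ} (x : Fin n → Bool) : wt1 x = ∑ i, if x i = true then 1 else 0 :=
  Finset.card_filter _ _

lemma wt1_zero (n : ℕ) : wt1 (zeroVec n) = 0 := by simp [wt1, zeroVec]

lemma wt1_eq_zero_iff {n : ℕ} (x : Fin n → Bool) : wt1 x = 0 ↔ ∀ i, x i = false := by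
  simp [wt1, Finset.filter_eq_empty_iff, Finset.card_eq_zero]

lemma wt1_pair_self {n : ℕ} (i : Fin n) : wt1 (pairVec i i) = 1 := by
  have : (Finset.univ.filter fun k => pairVec i i k = true) = {i} := by
    ext k; simp [pairVec_apply]
  simp [wt1, this]

lemma wt1_pair {n : ℕ} {i j : Fin n} (h : i ≠ j) : wt1 (pairVec i j) = 2 := by
  have : (Finset.univ.filter fun k => pairVec i j k = true) = {i, j} := by
    ext k; simp [pairVec_apply]
  rw [wt1, this, Finset.card_insert_of_notMem (by simp [h]), Finset.card_singleton]

lemma wt1_lt_exists_false {n : ℕ} {x : Fin n → Bool} (h : wt1 x < n) : ∃ i, x i = false := by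
  by_contra hc
  push_neg at hc
  have hx : ∀ i, x i = true := fun i => by
    cases hxi : x i with
    | false => exact absurd hxi (hc i)
    | true => rfl
  have : wt1 x = n := by simp [wt1, hx]
  omega

lemma wt1_allTrue (n : ℕ) : wt1 (fun _ : Fin n => true) = n := by simp [wt1]

-- Good of the Δ₀ atom
lemma good_delta (f : (Fin 1 → Bool) → ℂ) (hf : ∀ x, f x = if wt1 x = 0 then 1 else 0) :
    Good f := by
  have hz : wt1 (zeroVec 1) = 0 := wt1_zero 1
  have hf0 : f (zeroVec 1) = 1 := by rw [hf, if_pos hz]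
  refine ⟨by simp [hf0], ?_, ?_⟩
  · intro x
    cases hx : x 0 with
    | false =>
      have hxz : x = zeroVec 1 := by
        funext j
        have : j = 0 := Subsingleton.elim _ _
        rw [this, hx]; rfl
      subst hxz
      have hok : Ok f (zeroVec 1) := by intro i j hi; simp [zeroVec] at hi
      rw [if_pos hok, hz, hf0]; simp
    | true =>
      have h1 : wt1 x ≠ 0 := by
        intro h
        have := (wt1_eq_zero_iff x).mp h 0
        rw [hx] at this; exact absurd this (by simp)
      have hnok : ¬ Ok f x := by
        intro hok
        have := hok 0 0 hx hx
        rw [hf, if_neg (by rw [wt1_pair_self]; omega)] at this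
        exact this rfl
      rw [if_neg hnok, hf, if_neg h1]
  · intro i j k hik
    have : i = k := Subsingleton.elim _ _
    exact absurd this hik

-- Good of the g_k atom
lemma good_gk {n : ℕ} (hn : 1 ≤ n) (f : (Fin n → Bool) → ℂ)
    (hf : ∀ x, f x = if wt1 x = 0 then 2 else if wt1 x = 1 then 1 else 0) : Good f := by
  have hf0 : f (zeroVec n) = 2 := by rw [hf, if_pos (wt1_zero n)]
  have hsingle : ∀ i : Fin n, f (pairVec i i) = 1 := by
    intro i; rw [hf, wt1_pair_self]; norm_num
  have hdouble : ∀ i j : Fin n, i ≠ j → f (pairVec i j) = 0 := by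
    intro i j hij; rw [hf, wt1_pair hij]; norm_num
  refine ⟨by simp [hf0], ?_, ?_⟩
  · intro x
    by_cases hw : wt1 x = 0
    · have hx : ∀ i, x i = false := (wt1_eq_zero_iff x).mp hw
      have hok : Ok f x := by intro i j hi; rw [hx i] at hi; exact absurd hi (by simp)
      rw [if_pos hok, hf, if_pos hw, hf0, hw]; simp
    by_cases hw1 : wt1 x = 1
    · -- weight one
      obtain ⟨i₀, hi₀⟩ := Finset.card_eq_one.mp hw1
      have hmem : ∀ k, x k = true ↔ k = i₀ := by
        intro k
        constructor
        · intro hk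
          have : k ∈ Finset.univ.filter fun i => x i = true := by simp [hk]
          rw [hi₀] at this; simpa using this
        · intro hk
          rw [hk]
          have : i₀ ∈ Finset.univ.filter fun i => x i = true := by rw [hi₀]; simp
          simpa using this
      have hok : Ok f x := by
        intro i j hi hj
        rw [(hmem i).mp hi, (hmem j).mp hj, hsingle]
        exact one_ne_zero
      rw [if_pos hok, hf, if_neg hw, if_pos hw1, hf0, hw1]
      norm_num
    · -- weight ≥ 2
      have h2 : 1 < (Finset.univ.filter fun i => x i = true).card := by
        have h3 : wt1 x ≠ 0 := hw
        have h4 : wt1 x ≠ 1 := hw1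
        unfold wt1 at h3 h4; omega
      obtain ⟨a, ha, b, hb, hab⟩ := Finset.one_lt_card.mp h2
      simp only [Finset.mem_filter] at ha hb
      have hnok : ¬ Ok f x := by
        intro hok
        exact hok a b ha.2 hb.2 (hdouble a b hab)
      rw [if_neg hnok, hf, if_neg hw, if_neg hw1]
  · intro i j k hik _ _ _ _ _
    exact hdouble i k hik
-- Good is preserved by nonzero scaling and permutation of variables
lemma wt1_comp_equiv {n : ℕ} (σ : Equiv.Perm (Fin n)) (x : Fin n → Bool) :
    wt1 (x ∘ σ) = wt1 x := by
  rw [wt1_sum, wt1_sum]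
  exact Equiv.sum_comp σ (fun i => if x i = true then 1 else 0)

lemma pairVec_comp_equiv {n : ℕ} (σ : Equiv.Perm (Fin n)) (i j : Fin n) :
    (pairVec i j) ∘ σ = pairVec (σ.symm i) (σ.symm j) := by
  funext k
  simp only [Function.comp, pairVec]
  congr 1
  · exact decide_eq_decide.mpr (by rw [Equiv.eq_symm_apply])
  · exact decide_eq_decide.mpr (by rw [Equiv.eq_symm_apply])

lemma good_scale_perm {n : ℕ} {h : (Fin n → Bool) → ℂ} (hg : Good h) (c : ℂ) (hc : c ≠ 0)
    (σ : Equiv.Perm (Fin n)) : Good (fun x => c * h (x ∘ σ)) := by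
  obtain ⟨h0, hB, hC⟩ := hg
  set f : (Fin n → Bool) → ℂ := fun x => c * h (x ∘ σ) with hfdef
  have hzc : (zeroVec n) ∘ σ = zeroVec n := rfl
  have hf0 : f (zeroVec n) = c * h (zeroVec n) := by rw [hfdef]; rfl
  have hpair : ∀ i j, f (pairVec i j) = c * h (pairVec (σ.symm i) (σ.symm j)) := by
    intro i j
    show c * h ((pairVec i j) ∘ σ) = _
    rw [pairVec_comp_equiv]
  have hOk : ∀ x, Ok f x ↔ Ok h (x ∘ σ) := by
    intro x
    constructor
    · intro hok a b ha hb
      have := hok (σ a) (σ b) ha hb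
      rw [hpair] at this
      simp only [Equiv.symm_apply_apply] at this
      intro hz
      exact this (by rw [hz, mul_zero])
    · intro hok a b ha hb
      rw [hpair]
      have := hok (σ.symm a) (σ.symm b) (by simpa using ha) (by simpa using hb)
      exact mul_ne_zero hc this
  refine ⟨by rw [hf0]; exact mul_ne_zero hc h0, ?_, ?_⟩
  · intro x
    by_cases hok : Ok f x
    · rw [if_pos hok, hf0]
      have := hB (x ∘ σ)
      rw [if_pos ((hOk x).mp hok), wt1_comp_equiv] at this
      show c * h (x ∘ σ) = _
      rw [this]; ring
    · rw [if_neg hok]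
      have := hB (x ∘ σ)
      rw [if_neg (fun hh => hok ((hOk x).mpr hh))] at this
      show c * h (x ∘ σ) = 0
      rw [this, mul_zero]
  · intro i j k hik hii hjj hkk hij hjk
    rw [hpair] at hii hjj hkk hij hjk ⊢
    have h1 : h (pairVec (σ.symm i) (σ.symm j)) = 0 := by
      rcases mul_eq_zero.mp hij with hz | hz
      · exact absurd hz hc
      · exact hz
    have h2 : h (pairVec (σ.symm j) (σ.symm k)) = 0 := by
      rcases mul_eq_zero.mp hjk with hz | hz
      · exact absurd hz hc
      · exact hz
    have hii' : h (pairVec (σ.symm i) (σ.symm i)) ≠ 0 := fun hz => hii (by rw [hz, mul_zero])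
    have hjj' : h (pairVec (σ.symm j) (σ.symm j)) ≠ 0 := fun hz => hjj (by rw [hz, mul_zero])
    have hkk' : h (pairVec (σ.symm k) (σ.symm k)) ≠ 0 := fun hz => hkk (by rw [hz, mul_zero])
    have hik' : σ.symm i ≠ σ.symm k := fun hh => hik (by simpa using congrArg σ hh)
    rw [hC (σ.symm i) (σ.symm j) (σ.symm k) hik' hii' hjj' hkk' h1 h2, mul_zero]

section tensorgood
variable {a b : ℕ}

lemma castAdd_ne_natAdd (i : Fin a) (j : Fin b) : Fin.castAdd b i ≠ Fin.natAdd a j := by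
  intro h
  have h1 : (Fin.castAdd b i).val = i.val := rfl
  have h2 : (Fin.natAdd a j).val = a + j.val := rfl
  have := congrArg Fin.val h
  rw [h1, h2] at this
  have := i.isLt
  omega

lemma castAdd_inj {i j : Fin a} : (Fin.castAdd b i = Fin.castAdd b j) ↔ i = j := by
  constructor
  · intro h
    have := congrArg Fin.val h
    exact Fin.ext this
  · intro h; rw [h]

lemma natAdd_inj {i j : Fin b} : (Fin.natAdd a i = Fin.natAdd a j) ↔ i = j := by
  constructor
  · intro h
    have h2 := congrArg Fin.val h
    have e1 : (Fin.natAdd a i).val = a + i.val := rfl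
    have e2 : (Fin.natAdd a j).val = a + j.val := rfl
    rw [e1, e2] at h2
    exact Fin.ext (by omega)
  · intro h; rw [h]

lemma restL_zero : (fun i => zeroVec (a+b) (Fin.castAdd b i)) = zeroVec a := rfl
lemma restR_zero : (fun j => zeroVec (a+b) (Fin.natAdd a j)) = zeroVec b := rfl

lemma restL_pairLL (u v : Fin a) :
    (fun i => pairVec (Fin.castAdd b u) (Fin.castAdd b v) (Fin.castAdd b i)) = pairVec u v := by
  funext i
  simp only [pairVec]
  congr 1 <;> exact decide_eq_decide.mpr castAdd_inj

lemma restR_pairLL (u v : Fin a) :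
    (fun j => pairVec (Fin.castAdd b u) (Fin.castAdd b v) (Fin.natAdd a j)) = zeroVec b := by
  funext j
  simp only [pairVec, zeroVec]
  rw [decide_eq_false (fun h => castAdd_ne_natAdd u j h.symm),
      decide_eq_false (fun h => castAdd_ne_natAdd v j h.symm)]
  rfl

lemma restL_pairRR (u v : Fin b) :
    (fun i => pairVec (Fin.natAdd a u) (Fin.natAdd a v) (Fin.castAdd b i)) = zeroVec a := by
  funext i
  simp only [pairVec, zeroVec]
  rw [decide_eq_false (castAdd_ne_natAdd i u), decide_eq_false (castAdd_ne_natAdd i v)]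
  rfl

lemma restR_pairRR (u v : Fin b) :
    (fun j => pairVec (Fin.natAdd a u) (Fin.natAdd a v) (Fin.natAdd a j)) = pairVec u v := by
  funext j
  simp only [pairVec]
  congr 1 <;> exact decide_eq_decide.mpr natAdd_inj

lemma restL_pairLR (u : Fin a) (v : Fin b) :
    (fun i => pairVec (Fin.castAdd b u) (Fin.natAdd a v) (Fin.castAdd b i)) = pairVec u u := by
  funext i
  simp only [pairVec]
  rw [decide_eq_false (castAdd_ne_natAdd i v)]
  rw [Bool.or_false, (decide_eq_decide (p := _) (q := i = u)).mpr castAdd_inj, Bool.or_self]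

lemma restR_pairLR (u : Fin a) (v : Fin b) :
    (fun j => pairVec (Fin.castAdd b u) (Fin.natAdd a v) (Fin.natAdd a j)) = pairVec v v := by
  funext j
  simp only [pairVec]
  rw [decide_eq_false (fun h => castAdd_ne_natAdd u j h.symm)]
  rw [Bool.false_or, (decide_eq_decide (p := _) (q := j = v)).mpr natAdd_inj, Bool.or_self]

lemma wt1_add (x : Fin (a+b) → Bool) :
    wt1 x = wt1 (fun i => x (Fin.castAdd b i)) + wt1 (fun j => x (Fin.natAdd a j)) := by
  rw [wt1_sum, wt1_sum, wt1_sum]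
  exact Fin.sum_univ_add _

lemma good_tensor {f : (Fin a → Bool) → ℂ} {g : (Fin b → Bool) → ℂ}
    (hf : Good f) (hg : Good g) : Good (tensorSig f g) := by
  obtain ⟨f0, fB, fC⟩ := hf
  obtain ⟨g0, gB, gC⟩ := hg
  set T := tensorSig f g with hT
  have hT0 : T (zeroVec (a+b)) = f (zeroVec a) * g (zeroVec b) := by
    rw [hT]; unfold tensorSig; rw [restL_zero, restR_zero]
  have hTLL : ∀ u v : Fin a, T (pairVec (Fin.castAdd b u) (Fin.castAdd b v))
      = f (pairVec u v) * g (zeroVec b) := by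
    intro u v; rw [hT]; unfold tensorSig; rw [restL_pairLL, restR_pairLL]
  have hTRR : ∀ u v : Fin b, T (pairVec (Fin.natAdd a u) (Fin.natAdd a v))
      = f (zeroVec a) * g (pairVec u v) := by
    intro u v; rw [hT]; unfold tensorSig; rw [restL_pairRR, restR_pairRR]
  have hTLR : ∀ (u : Fin a) (v : Fin b), T (pairVec (Fin.castAdd b u) (Fin.natAdd a v))
      = f (pairVec u u) * g (pairVec v v) := by
    intro u v; rw [hT]; unfold tensorSig; rw [restL_pairLR, restR_pairLR]
  have hOk : ∀ x : Fin (a+b) → Bool, Ok T x ↔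
      (Ok f (fun i => x (Fin.castAdd b i)) ∧ Ok g (fun j => x (Fin.natAdd a j))) := by
    intro x
    constructor
    · intro hok
      constructor
      · intro u v hu hv
        have := hok _ _ hu hv
        rw [hTLL] at this
        exact fun hz => this (by rw [hz, zero_mul])
      · intro u v hu hv
        have := hok _ _ hu hv
        rw [hTRR] at this
        exact fun hz => this (by rw [hz, mul_zero])
    · rintro ⟨hokf, hokg⟩ u v hu hv
      induction u using Fin.addCases with
      | left u =>
        induction v using Fin.addCases with
        | left v =>
          rw [hTLL]
          exact mul_ne_zero (hokf u v hu hv) g0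
        | right v =>
          rw [hTLR]
          exact mul_ne_zero (hokf u u hu hu) (hokg v v hv hv)
      | right u =>
        induction v using Fin.addCases with
        | left v =>
          rw [pairVec_comm, hTLR]
          exact mul_ne_zero (hokf v v hv hv) (hokg u u hu hu)
        | right v =>
          rw [hTRR]
          exact mul_ne_zero f0 (hokg u v hu hv)
  refine ⟨by rw [hT0]; exact mul_ne_zero f0 g0, ?_, ?_⟩
  · intro x
    have hx : T x = f (fun i => x (Fin.castAdd b i)) * g (fun j => x (Fin.natAdd a j)) := rfl
    by_cases hok : Ok T x
    · obtain ⟨h1, h2⟩ := (hOk x).mp hok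
      rw [if_pos hok, hx, fB, gB, if_pos h1, if_pos h2, hT0, wt1_add, pow_add]
      ring
    · rw [if_neg hok, hx]
      rcases (not_and_or.mp (fun hc => hok ((hOk x).mpr hc))) with hnf | hng
      · rw [fB, if_neg hnf, zero_mul]
      · rw [gB, if_neg hng, mul_zero]
  · intro i j k hik hii hjj hkk hij hjk
    induction i using Fin.addCases with
    | left i =>
      rw [hTLL] at hii
      have hii' : f (pairVec i i) ≠ 0 := fun hz => hii (by rw [hz, zero_mul])
      induction j using Fin.addCases with
      | left j =>
        rw [hTLL] at hjj hij
        have hjj' : f (pairVec j j) ≠ 0 := fun hz => hjj (by rw [hz, zero_mul])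
        have hij' : f (pairVec i j) = 0 := by
          rcases mul_eq_zero.mp hij with hz | hz
          · exact hz
          · exact absurd hz g0
        induction k using Fin.addCases with
        | left k =>
          rw [hTLL] at hkk hjk ⊢
          have hkk' : f (pairVec k k) ≠ 0 := fun hz => hkk (by rw [hz, zero_mul])
          have hjk' : f (pairVec j k) = 0 := by
            rcases mul_eq_zero.mp hjk with hz | hz
            · exact hz
            · exact absurd hz g0
          rw [fC i j k (fun h => hik (by rw [h])) hii' hjj' hkk' hij' hjk', zero_mul]
        | right k =>
          rw [hTLR] at hjk
          rw [hTRR] at hkk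
          have hkk' : g (pairVec k k) ≠ 0 := fun hz => hkk (by rw [hz, mul_zero])
          exact absurd hjk (mul_ne_zero hjj' hkk')
      | right j =>
        rw [hTLR] at hij
        rw [hTRR] at hjj
        have hjj' : g (pairVec j j) ≠ 0 := fun hz => hjj (by rw [hz, mul_zero])
        exact absurd hij (mul_ne_zero hii' hjj')
    | right i =>
      rw [hTRR] at hii
      have hii' : g (pairVec i i) ≠ 0 := fun hz => hii (by rw [hz, mul_zero])
      induction j using Fin.addCases with
      | left j =>
        rw [pairVec_comm, hTLR] at hij
        rw [hTLL] at hjj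
        have hjj' : f (pairVec j j) ≠ 0 := fun hz => hjj (by rw [hz, zero_mul])
        exact absurd hij (mul_ne_zero hjj' hii')
      | right j =>
        rw [hTRR] at hjj hij
        have hjj' : g (pairVec j j) ≠ 0 := fun hz => hjj (by rw [hz, mul_zero])
        have hij' : g (pairVec i j) = 0 := by
          rcases mul_eq_zero.mp hij with hz | hz
          · exact absurd hz f0
          · exact hz
        induction k using Fin.addCases with
        | left k =>
          rw [pairVec_comm, hTLR] at hjk
          rw [hTLL] at hkk
          have hkk' : f (pairVec k k) ≠ 0 := fun hz => hkk (by rw [hz, zero_mul])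
          exact absurd hjk (mul_ne_zero hkk' hjj')
        | right k =>
          rw [hTRR] at hkk hjk ⊢
          have hkk' : g (pairVec k k) ≠ 0 := fun hz => hkk (by rw [hz, mul_zero])
          have hjk' : g (pairVec j k) = 0 := by
            rcases mul_eq_zero.mp hjk with hz | hz
            · exact absurd hz f0
            · exact hz
          rw [gC i j k (fun h => hik (by rw [h])) hii' hjj' hkk' hij' hjk', mul_zero]

end tensorgood

lemma good_of_tensorOfS : ∀ {n : ℕ} {h : (Fin n → Bool) → ℂ}, TensorOfS n h → Good h := by
  intro n h hT
  induction hT with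
  | atom hs =>
    rcases hs with ⟨rfl, hd⟩ | ⟨hk, hd⟩
    · exact good_delta _ hd
    · exact good_gk hk _ hd
  | tensor hf hg ihf ihg => exact good_tensor ihf ihg

lemma good_of_InTC {n : ℕ} {f : (Fin n → Bool) → ℂ} (h : InTC f) :
    (∀ x, f x = 0) ∨ Good f := by
  rcases h with h | ⟨c, hc, σ, h, hT, hfx⟩
  · exact Or.inl h
  · right
    have : f = fun x => c * h (x ∘ σ) := funext hfx
    rw [this]
    exact good_scale_perm (good_of_tensorOfS hT) c hc σ

section pinlemmas
variable {m : ℕ} (i : Fin (m+1))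

lemma insertNth_false_zero : i.insertNth false (zeroVec m) = zeroVec (m+1) := by
  funext k
  rcases eq_or_ne k i with rfl | hk
  · rw [Fin.insertNth_apply_same]; rfl
  · obtain ⟨j, rfl⟩ := Fin.exists_succAbove_eq hk
    rw [Fin.insertNth_apply_succAbove]; rfl

lemma insertNth_true_zero : i.insertNth true (zeroVec m) = pairVec i i := by
  funext k
  rcases eq_or_ne k i with rfl | hk
  · rw [Fin.insertNth_apply_same]
    simp [pairVec]
  · obtain ⟨j, rfl⟩ := Fin.exists_succAbove_eq hk
    rw [Fin.insertNth_apply_succAbove]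
    simp [pairVec, zeroVec, Fin.succAbove_ne i j]

lemma insertNth_false_pair (u v : Fin m) :
    i.insertNth false (pairVec u v) = pairVec (i.succAbove u) (i.succAbove v) := by
  funext k
  rcases eq_or_ne k i with rfl | hk
  · rw [Fin.insertNth_apply_same]
    simp [pairVec, (Fin.succAbove_ne k u).symm, (Fin.succAbove_ne k v).symm]
  · obtain ⟨j, rfl⟩ := Fin.exists_succAbove_eq hk
    rw [Fin.insertNth_apply_succAbove]
    simp only [pairVec]
    congr 1 <;> exact decide_eq_decide.mpr
      ⟨fun h => by rw [h], fun h => Fin.succAbove_right_injective h⟩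

lemma insertNth_true_pair_self (u : Fin m) :
    i.insertNth true (pairVec u u) = pairVec i (i.succAbove u) := by
  funext k
  rcases eq_or_ne k i with rfl | hk
  · rw [Fin.insertNth_apply_same]
    simp [pairVec]
  · obtain ⟨j, rfl⟩ := Fin.exists_succAbove_eq hk
    rw [Fin.insertNth_apply_succAbove]
    simp only [pairVec, Bool.or_self]
    rw [decide_eq_false (Fin.succAbove_ne i j), Bool.false_or]
    exact decide_eq_decide.mpr
      ⟨fun h => by rw [h], fun h => Fin.succAbove_right_injective h⟩

lemma wt1_insertNth (c : Bool) (x : Fin m → Bool) :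
    wt1 (i.insertNth c x) = (if c = true then 1 else 0) + wt1 x := by
  rw [wt1_sum, wt1_sum, Fin.sum_univ_succAbove _ i, Fin.insertNth_apply_same]
  congr 1
  apply Finset.sum_congr rfl
  intro j _
  rw [Fin.insertNth_apply_succAbove]

lemma pin_eval {f : (Fin (m+1) → Bool) → ℂ} {c : Bool} (x : Fin (m+1) → Bool) (hx : x i = c) :
    pinSig f i c (fun j => x (i.succAbove j)) = f x := by
  unfold pinSig
  congr 1
  funext k
  rcases eq_or_ne k i with rfl | hk
  · rw [Fin.insertNth_apply_same, hx]
  · obtain ⟨j, rfl⟩ := Fin.exists_succAbove_eq hk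
    rw [Fin.insertNth_apply_succAbove]

lemma pin_pair {f : (Fin (m+1) → Bool) → ℂ} (u v : Fin m) :
    pinSig f i false (pairVec u v) = f (pairVec (i.succAbove u) (i.succAbove v)) := by
  unfold pinSig; rw [insertNth_false_pair]

lemma pin_zero_false {f : (Fin (m+1) → Bool) → ℂ} :
    pinSig f i false (zeroVec m) = f (zeroVec (m+1)) := by
  unfold pinSig; rw [insertNth_false_zero]

lemma pin_zero_true {f : (Fin (m+1) → Bool) → ℂ} :
    pinSig f i true (zeroVec m) = f (pairVec i i) := by
  unfold pinSig; rw [insertNth_true_zero]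

lemma pin_pair_true {f : (Fin (m+1) → Bool) → ℂ} (u : Fin m) :
    pinSig f i true (pairVec u u) = f (pairVec i (i.succAbove u)) := by
  unfold pinSig; rw [insertNth_true_pair_self]

lemma wt1_pin_arg_false (x : Fin (m+1) → Bool) (hx : x i = false) :
    wt1 (fun j => x (i.succAbove j)) = wt1 x := by
  have : x = i.insertNth false (fun j => x (i.succAbove j)) := by
    funext k
    rcases eq_or_ne k i with rfl | hk
    · rw [Fin.insertNth_apply_same, hx]
    · obtain ⟨j, rfl⟩ := Fin.exists_succAbove_eq hk
      rw [Fin.insertNth_apply_succAbove]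
  conv_rhs => rw [this, wt1_insertNth]
  simp

lemma wt1_pin_arg_true (x : Fin (m+1) → Bool) (hx : x i = true) :
    wt1 x = 1 + wt1 (fun j => x (i.succAbove j)) := by
  have : x = i.insertNth true (fun j => x (i.succAbove j)) := by
    funext k
    rcases eq_or_ne k i with rfl | hk
    · rw [Fin.insertNth_apply_same, hx]
    · obtain ⟨j, rfl⟩ := Fin.exists_succAbove_eq hk
      rw [Fin.insertNth_apply_succAbove]
  conv_lhs => rw [this, wt1_insertNth]
  simp

end pinlemmas

lemma main_good {m : ℕ} (hm : 3 ≤ m) (f : (Fin (m+1) → Bool) → ℂ)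
    (hpin : ∀ (i : Fin (m+1)) (c : Bool), InTC (pinSig f i c)) :
    (∀ x, f x = 0) ∨ Good f := by
  classical
  by_cases hz : ∀ x, f x = 0
  · exact Or.inl hz
  right
  push_neg at hz
  obtain ⟨x₀, hx₀⟩ := hz
  have hGood : ∀ (i : Fin (m+1)) (c : Bool) (y : Fin m → Bool),
      pinSig f i c y ≠ 0 → Good (pinSig f i c) := by
    intro i c y hy
    rcases good_of_InTC (hpin i c) with h | h
    · exact absurd (h y) hy
    · exact h
  -- Step 1 : f 0 ≠ 0
  have hf0 : f (zeroVec (m+1)) ≠ 0 := by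
    have key : ∀ x : Fin (m+1) → Bool, f x ≠ 0 → (∃ i, x i = false) →
        f (zeroVec (m+1)) ≠ 0 := by
      rintro x hx ⟨i, hi⟩
      have hnz : pinSig f i false (fun j => x (i.succAbove j)) ≠ 0 := by
        rw [pin_eval i x hi]; exact hx
      have hr := hGood i false _ hnz
      have := hr.1
      rwa [pin_zero_false] at this
    by_cases hall : ∀ i, x₀ i = true
    · -- x₀ is all ones; get a light nonzero point first
      set i0 : Fin (m+1) := ⟨0, by omega⟩ with hi0
      have hnz : pinSig f i0 true (fun j => x₀ (i0.succAbove j)) ≠ 0 := by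
        rw [pin_eval i0 x₀ (hall i0)]; exact hx₀
      obtain ⟨p0, pB, pC⟩ := hGood i0 true _ hnz
      have hargs : (fun j => x₀ (i0.succAbove j)) = (fun _ : Fin m => true) :=
        funext (fun j => hall _)
      have hpall : pinSig f i0 true (fun _ : Fin m => true) ≠ 0 := by
        rw [← hargs, pin_eval i0 x₀ (hall i0)]; exact hx₀
      have hOkp : Ok (pinSig f i0 true) (fun _ : Fin m => true) := by
        by_contra hok
        have := pB (fun _ : Fin m => true)
        rw [if_neg hok] at this
        exact hpall this
      set j0 : Fin m := ⟨0, by omega⟩ with hj0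
      have hw := hOkp j0 j0 rfl rfl
      rw [pin_pair_true] at hw
      have hwlt : wt1 (pairVec i0 (i0.succAbove j0)) < m + 1 := by
        rw [wt1_pair (Ne.symm (Fin.succAbove_ne i0 j0))]
        omega
      obtain ⟨l, hl⟩ := wt1_lt_exists_false hwlt
      exact key _ hw ⟨l, hl⟩
    · push_neg at hall
      obtain ⟨i, hi⟩ := hall
      refine key x₀ hx₀ ⟨i, ?_⟩
      cases hxi : x₀ i with
      | false => rfl
      | true => exact absurd hxi hi
  -- Step 2 : the value identity at points with at least one `false`
  have hBf : ∀ x : Fin (m+1) → Bool, (∃ i, x i = false) →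
      f x = if Ok f x then f (zeroVec (m+1)) * (2:ℂ)⁻¹ ^ wt1 x else 0 := by
    rintro x ⟨i, hi⟩
    obtain ⟨r0, rB, rC⟩ := hGood i false (zeroVec m) (by rw [pin_zero_false]; exact hf0)
    have hfx : f x = pinSig f i false (fun j => x (i.succAbove j)) := (pin_eval i x hi).symm
    have hOkiff : Ok (pinSig f i false) (fun j => x (i.succAbove j)) ↔ Ok f x := by
      constructor
      · intro hok u v hu hv
        have hui : u ≠ i := fun h => by rw [h, hi] at hu; exact Bool.noConfusion hu
        have hvi : v ≠ i := fun h => by rw [h, hi] at hv; exact Bool.noConfusion hv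
        obtain ⟨u', rfl⟩ := Fin.exists_succAbove_eq hui
        obtain ⟨v', rfl⟩ := Fin.exists_succAbove_eq hvi
        have := hok u' v' hu hv
        rwa [pin_pair] at this
      · intro hok u v hu hv
        rw [pin_pair]
        exact hok _ _ hu hv
    rw [hfx, rB, pin_zero_false, wt1_pin_arg_false i x hi]
    by_cases hok : Ok f x
    · rw [if_pos (hOkiff.mpr hok), if_pos hok]
    · rw [if_neg (fun h => hok (hOkiff.mp h)), if_neg hok]
  -- Step 3 : the value identity everywhere
  have hB : ∀ x : Fin (m+1) → Bool,
      f x = if Ok f x then f (zeroVec (m+1)) * (2:ℂ)⁻¹ ^ wt1 x else 0 := by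
    intro x
    by_cases hfalse : ∃ i, x i = false
    · exact hBf x hfalse
    · push_neg at hfalse
      have hall : ∀ i, x i = true := by
        intro i
        cases hxi : x i with
        | false => exact absurd hxi (hfalse i)
        | true => rfl
      by_cases hok : Ok f x
      · -- positive case: all pairs nonzero
        have hpairs : ∀ u v : Fin (m+1), f (pairVec u v) ≠ 0 :=
          fun u v => hok u v (hall u) (hall v)
        set i0 : Fin (m+1) := ⟨0, by omega⟩ with hi0
        obtain ⟨p0, pB, pC⟩ := hGood i0 true (zeroVec m)
          (by rw [pin_zero_true]; exact hpairs i0 i0)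
        have hOkp : Ok (pinSig f i0 true) (fun _ : Fin m => true) := by
          intro u v _ _
          rcases eq_or_ne u v with rfl | huv
          · rw [pin_pair_true]
            exact hpairs _ _
          · -- weight-3 point
            show pinSig f i0 true (pairVec u v) ≠ 0
            have hpinw : pinSig f i0 true (pairVec u v)
                = f (i0.insertNth true (pairVec u v)) := rfl
            set w : Fin (m+1) → Bool := i0.insertNth true (pairVec u v) with hwdef
            have hwt : wt1 w = 3 := by
              rw [hwdef, wt1_insertNth, wt1_pair huv]
              norm_num
            have hOkw : Ok f w := fun u' v' _ _ => hpairs u' v'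
            rw [hpinw, hBf w (wt1_lt_exists_false (by omega)), if_pos hOkw, hwt]
            exact mul_ne_zero hf0 (pow_ne_zero _ (by norm_num))
        have h1 : f x = pinSig f i0 true (fun _ : Fin m => true) := by
          rw [show (fun _ : Fin m => true) = (fun j => x (i0.succAbove j)) from
            funext (fun j => (hall _).symm), pin_eval i0 x (hall i0)]
        have h2 := pB (fun _ : Fin m => true)
        rw [if_pos hOkp, pin_zero_true, wt1_allTrue] at h2
        have h3 : f (pairVec i0 i0) = f (zeroVec (m+1)) * (2:ℂ)⁻¹ ^ (1:ℕ) := by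
          have h4 := hBf (pairVec i0 i0) (by
            refine wt1_lt_exists_false ?_
            rw [wt1_pair_self]; omega)
          have hokp : Ok f (pairVec i0 i0) := fun u v _ _ => hpairs u v
          rw [if_pos hokp] at h4
          rw [h4, wt1_pair_self]
        have hwtx : wt1 x = m + 1 := by
          rw [show x = (fun _ : Fin (m+1) => true) from funext hall, wt1_allTrue]
        rw [if_pos hok, h1, h2, h3, hwtx]
        ring
      · rw [if_neg hok]
        -- some pair is zero
        have : ∃ u v : Fin (m+1), f (pairVec u v) = 0 := by
          by_contra hc
          push_neg at hc
          exact hok (fun u v _ _ => hc u v)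
        obtain ⟨u, v, huv⟩ := this
        rcases good_of_InTC (hpin u true) with hzero | ⟨p0, pB, pC⟩
        · rw [show f x = pinSig f u true (fun j => x (u.succAbove j)) from
            (pin_eval u x (hall u)).symm]
          exact hzero _
        · rw [pin_zero_true] at p0
          have huv' : u ≠ v := by
            rintro rfl
            exact p0 huv
          obtain ⟨v', rfl⟩ := Fin.exists_succAbove_eq (Ne.symm huv')
          have hnok : ¬ Ok (pinSig f u true) (fun _ : Fin m => true) := by
            intro hok'
            have := hok' v' v' rfl rfl
            rw [pin_pair_true] at this
            exact this huv
          have := pB (fun _ : Fin m => true)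
          rw [if_neg hnok] at this
          rw [show f x = pinSig f u true (fun j => x (u.succAbove j)) from
            (pin_eval u x (hall u)).symm,
            show (fun j => x (u.succAbove j)) = (fun _ : Fin m => true) from
            funext (fun j => hall _), this]
  -- Step 4 : transitivity
  refine ⟨hf0, hB, ?_⟩
  intro u v w huw huu hvv hww huv hvw
  have : ∃ l : Fin (m+1), l ≠ u ∧ l ≠ v ∧ l ≠ w := by
    by_contra hc
    push_neg at hc
    have hsub : (Finset.univ : Finset (Fin (m+1))) ⊆ {u, v, w} := by
      intro l _
      by_cases h1 : l = u
      · simp [h1]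
      by_cases h2 : l = v
      · simp [h2]
      simp [hc l h1 h2]
    have h1 := Finset.card_le_card hsub
    have h2 : ({u, v, w} : Finset (Fin (m+1))).card ≤ 3 := by
      apply le_trans (Finset.card_insert_le _ _)
      have := Finset.card_insert_le v ({w} : Finset (Fin (m+1)))
      simp at this ⊢
      omega
    simp at h1
    omega
  obtain ⟨l, hlu, hlv, hlw⟩ := this
  obtain ⟨r0, rB, rC⟩ := hGood l false (zeroVec m) (by rw [pin_zero_false]; exact hf0)
  obtain ⟨u', rfl⟩ := Fin.exists_succAbove_eq (Ne.symm hlu)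
  obtain ⟨v', rfl⟩ := Fin.exists_succAbove_eq (Ne.symm hlv)
  obtain ⟨w', rfl⟩ := Fin.exists_succAbove_eq (Ne.symm hlw)
  have hres := rC u' v' w'
    (fun h => huw (by rw [h]))
    (by rw [pin_pair]; exact huu)
    (by rw [pin_pair]; exact hvv)
    (by rw [pin_pair]; exact hww)
    (by rw [pin_pair]; exact huv)
    (by rw [pin_pair]; exact hvw)
  rwa [pin_pair] at hres

lemma castT {m m' : ℕ} (h : m = m') {T : (Fin m → Bool) → ℂ} (hT : TensorOfS m T) :
    TensorOfS m' (fun z => T (fun i => z (finCongr h i))) := by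
  subst h
  have : (fun z : Fin m → Bool => T (fun i => z (finCongr rfl i))) = T := by
    funext z
    congr 1
  rwa [this]

lemma splitTC {n a b : ℕ} (hab : a + b = n) (f : (Fin n → Bool) → ℂ)
    (e : Fin n ≃ Fin a ⊕ Fin b) (s : ℂ) (hs : s ≠ 0)
    (F : (Fin a → Bool) → ℂ) (G : (Fin b → Bool) → ℂ)
    (hF : InTC F ∨ a = 0) (hG : InTC G)
    (hf : ∀ x, f x = s * F (fun i => x (e.symm (Sum.inl i))) * G (fun j => x (e.symm (Sum.inr j)))) :
    InTC f := by
  rcases hG with hG0 | ⟨c₂, hc₂, σ₂, h₂, hT₂, hG⟩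
  · left
    intro x
    rw [hf, hG0, mul_zero]
  rcases hF with (hF0 | ⟨c₁, hc₁, σ₁, h₁, hT₁, hF⟩) | ha
  · left
    intro x
    rw [hf, hF0, mul_zero, zero_mul]
  · -- main case
    right
    set σ : Equiv.Perm (Fin n) :=
      (finCongr hab).symm.trans (finSumFinEquiv.symm.trans ((σ₁.sumCongr σ₂).trans e.symm))
      with hσ
    set h : (Fin n → Bool) → ℂ := fun z => tensorSig h₁ h₂ (fun i => z (finCongr hab i)) with hh
    refine ⟨s * c₁ * c₂, by simp [hs, hc₁, hc₂], σ, h,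
      castT hab (TensorOfS.tensor hT₁ hT₂), ?_⟩
    intro x
    have key : ∀ v : Fin (a+b),
        σ (finCongr hab v) = e.symm ((σ₁.sumCongr σ₂) (finSumFinEquiv.symm v)) := by
      intro v
      rw [hσ]
      simp
    have hco : h (x ∘ σ) = h₁ (fun i => x (e.symm (Sum.inl (σ₁ i))))
        * h₂ (fun j => x (e.symm (Sum.inr (σ₂ j)))) := by
      show tensorSig h₁ h₂ (fun v => x (σ (finCongr hab v))) = _
      unfold tensorSig
      congr 1
      · congr 1
        funext i
        show x (σ (finCongr hab (Fin.castAdd b i))) = _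
        rw [key (Fin.castAdd b i), finSumFinEquiv_symm_apply_castAdd,
          Equiv.sumCongr_apply, Sum.map_inl]
      · congr 1
        funext j
        show x (σ (finCongr hab (Fin.natAdd a j))) = _
        rw [key (Fin.natAdd a j), finSumFinEquiv_symm_apply_natAdd,
          Equiv.sumCongr_apply, Sum.map_inr]
    rw [hf x, hF (fun i => x (e.symm (Sum.inl i))), hG (fun j => x (e.symm (Sum.inr j))), hco]
    have e1 : ((fun i => x (e.symm (Sum.inl i))) ∘ ⇑σ₁) = fun i => x (e.symm (Sum.inl (σ₁ i))) := rfl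
    have e2 : ((fun j => x (e.symm (Sum.inr j))) ∘ ⇑σ₂) = fun j => x (e.symm (Sum.inr (σ₂ j))) := rfl
    rw [e1, e2]
    ring
  · -- a = 0
    subst ha
    have hb : b = n := by omega
    set F₀ : ℂ := F (fun i => i.elim0) with hF₀
    have hFconst : ∀ y, F y = F₀ := by
      intro y
      rw [hF₀]
      congr 1
      funext i
      exact i.elim0
    by_cases hz : F₀ = 0
    · left
      intro x
      rw [hf, hFconst, hz, mul_zero, zero_mul]
    · right
      set ψ : Fin b ≃ Fin n := (Equiv.emptySum (Fin 0) (Fin b)).symm.trans e.symm with hψ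
      set σ : Equiv.Perm (Fin n) := (finCongr hb).symm.trans (σ₂.trans ψ) with hσ
      set h : (Fin n → Bool) → ℂ := fun z => h₂ (fun j => z (finCongr hb j)) with hh
      refine ⟨s * F₀ * c₂, by simp [hs, hz, hc₂], σ, h, castT hb hT₂, ?_⟩
      intro x
      have key : ∀ j : Fin b, σ (finCongr hb j) = e.symm (Sum.inr (σ₂ j)) := by
        intro j
        rw [hσ]
        simp only [Equiv.trans_apply, Equiv.symm_apply_apply]
        first
        | rfl
        | (rw [hψ]
           simp only [Equiv.trans_apply]
           congr 1)
      have hco : h (x ∘ σ) = h₂ (fun j => x (e.symm (Sum.inr (σ₂ j)))) := by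
        show h₂ (fun j => x (σ (finCongr hb j))) = _
        have harg : (fun j => x (σ (finCongr hb j))) = fun j => x (e.symm (Sum.inr (σ₂ j))) :=
          funext fun j => by rw [key]
        rw [harg]
      rw [hf x, hFconst, hG (fun j => x (e.symm (Sum.inr j))), hco]
      have e2 : ((fun j => x (e.symm (Sum.inr j))) ∘ ⇑σ₂) = fun j => x (e.symm (Sum.inr (σ₂ j))) := rfl
      rw [e2]
      ring

section restrictsec
variable {n a k : ℕ}

lemma finsetSplit (B : Finset (Fin n)) :
    ∃ e : Fin n ≃ Fin (Bᶜ.card) ⊕ Fin (B.card),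
      (∀ i, e.symm (Sum.inl i) ∉ B) ∧ (∀ j, e.symm (Sum.inr j) ∈ B) := by
  classical
  have eA : {x : Fin n // x ∉ B} ≃ Fin (Bᶜ.card) :=
    (Equiv.subtypeEquivRight (fun x => (Finset.mem_compl).symm)).trans (Bᶜ).equivFin
  have eB : {x : Fin n // x ∈ B} ≃ Fin (B.card) := B.equivFin
  refine ⟨((Equiv.sumCompl (· ∈ B)).symm.trans (Equiv.sumComm _ _)).trans
    (Equiv.sumCongr eA eB), ?_, ?_⟩
  · intro i
    simp only [Equiv.symm_trans_apply, Equiv.sumCongr_symm, Equiv.sumCongr_apply,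
      Sum.map_inl, Equiv.sumComm_symm, Equiv.sumComm_apply, Sum.swap_inl, Equiv.symm_symm,
      Equiv.sumCompl_apply_inr]
    exact (eA.symm i).2
  · intro j
    simp only [Equiv.symm_trans_apply, Equiv.sumCongr_symm, Equiv.sumCongr_apply,
      Sum.map_inr, Equiv.sumComm_symm, Equiv.sumComm_apply, Sum.swap_inr, Equiv.symm_symm,
      Equiv.sumCompl_apply_inl]
    exact (eB.symm j).2

variable (e : Fin n ≃ Fin a ⊕ Fin k)

def embedB (y : Fin a → Bool) : Fin n → Bool := fun v => Sum.elim y (fun _ => false) (e v)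

lemma embedB_zero : embedB e (zeroVec a) = zeroVec n := by
  funext v
  unfold embedB
  cases e v <;> rfl

lemma embedB_pair (i j : Fin a) :
    embedB e (pairVec i j) = pairVec (e.symm (Sum.inl i)) (e.symm (Sum.inl j)) := by
  funext v
  unfold embedB
  cases hv : e v with
  | inl u =>
    show pairVec i j u = _
    unfold pairVec
    congr 1 <;> refine decide_eq_decide.mpr ?_
    · rw [Equiv.eq_symm_apply, hv]
      exact ⟨fun h => by rw [h], fun h => Sum.inl_injective h⟩
    · rw [Equiv.eq_symm_apply, hv]
      exact ⟨fun h => by rw [h], fun h => Sum.inl_injective h⟩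
  | inr w =>
    show false = _
    unfold pairVec
    rw [decide_eq_false, decide_eq_false]
    · rfl
    · rw [Equiv.eq_symm_apply, hv]
      exact fun h => nomatch h
    · rw [Equiv.eq_symm_apply, hv]
      exact fun h => nomatch h

lemma wt1_split (x : Fin n → Bool) :
    wt1 x = wt1 (fun i => x (e.symm (Sum.inl i))) + wt1 (fun j => x (e.symm (Sum.inr j))) := by
  rw [wt1_sum, wt1_sum, wt1_sum]
  rw [← Equiv.sum_comp e.symm (fun v => if x v = true then 1 else 0), Fintype.sum_sum_type]

lemma wt1_embedB (y : Fin a → Bool) : wt1 (embedB e y) = wt1 y := by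
  rw [wt1_split e (embedB e y)]
  have h1 : (fun i => embedB e y (e.symm (Sum.inl i))) = y := by
    funext i
    unfold embedB
    rw [Equiv.apply_symm_apply]
    rfl
  have h2 : (fun j => embedB e y (e.symm (Sum.inr j))) = zeroVec k := by
    funext j
    unfold embedB
    rw [Equiv.apply_symm_apply]
    rfl
  rw [h1, h2, wt1_zero]
  omega

lemma good_resF {f : (Fin n → Bool) → ℂ} (hf : Good f) : Good (fun y => f (embedB e y)) := by
  classical
  obtain ⟨hf0, hB, hC⟩ := hf
  set F : (Fin a → Bool) → ℂ := fun y => f (embedB e y) with hF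
  have hpair : ∀ i j, F (pairVec i j) = f (pairVec (e.symm (Sum.inl i)) (e.symm (Sum.inl j))) := by
    intro i j
    rw [hF]
    show f _ = _
    rw [embedB_pair]
  have hF0 : F (zeroVec a) = f (zeroVec n) := by
    rw [hF]
    show f _ = _
    rw [embedB_zero]
  have hOk : ∀ y, Ok f (embedB e y) ↔ Ok F y := by
    intro y
    constructor
    · intro hok i j hi hj
      rw [hpair]
      refine hok _ _ ?_ ?_ <;> · unfold embedB; rw [Equiv.apply_symm_apply]; assumption
    · intro hok u v hu hv
      unfold embedB at hu hv
      cases hu' : e u with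
      | inr w => rw [hu'] at hu; exact absurd hu (by simp)
      | inl i =>
        rw [hu'] at hu
        cases hv' : e v with
        | inr w => rw [hv'] at hv; exact absurd hv (by simp)
        | inl j =>
          rw [hv'] at hv
          have heu : u = e.symm (Sum.inl i) := by rw [Equiv.eq_symm_apply, hu']
          have hev : v = e.symm (Sum.inl j) := by rw [Equiv.eq_symm_apply, hv']
          rw [heu, hev, ← hpair]
          exact hok i j hu hv
  refine ⟨by rw [hF0]; exact hf0, ?_, ?_⟩
  · intro y
    have hthis := hB (embedB e y)
    rw [wt1_embedB] at hthis
    by_cases hok : Ok F y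
    · rw [if_pos hok]
      calc F y = f (embedB e y) := rfl
        _ = f (zeroVec n) * (2:ℂ)⁻¹ ^ wt1 y := by
              rw [hthis, if_pos ((hOk y).mpr hok)]
        _ = F (zeroVec a) * (2:ℂ)⁻¹ ^ wt1 y := by rw [hF0]
    · rw [if_neg hok]
      calc F y = f (embedB e y) := rfl
        _ = 0 := by rw [hthis, if_neg (fun h => hok ((hOk y).mp h))]
  · intro i j l hil hii hjj hll hij hjl
    rw [hpair] at hii hjj hll hij hjl ⊢
    refine hC _ _ _ ?_ hii hjj hll hij hjl
    intro hc
    exact hil (Sum.inl_injective (e.symm.injective hc))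

end restrictsec

lemma wt1_eq_one_iff {n : ℕ} {x : Fin n → Bool} (h : wt1 x = 1) :
    ∃ j₀, ∀ j, x j = true ↔ j = j₀ := by
  obtain ⟨j₀, hj₀⟩ := Finset.card_eq_one.mp h
  refine ⟨j₀, fun j => ⟨fun hj => ?_, fun hj => ?_⟩⟩
  · have : j ∈ Finset.univ.filter fun i => x i = true := by simp [hj]
    rw [hj₀] at this
    simpa using this
  · rw [hj]
    have : j₀ ∈ Finset.univ.filter fun i => x i = true := by rw [hj₀]; simp
    simpa using this

lemma wt1_ge_two_pair {n : ℕ} {x : Fin n → Bool} (h : wt1 x ≠ 0) (h1 : wt1 x ≠ 1) :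
    ∃ u v, u ≠ v ∧ x u = true ∧ x v = true := by
  have h2 : 1 < (Finset.univ.filter fun i => x i = true).card := by
    unfold wt1 at h h1
    omega
  obtain ⟨u, hu, v, hv, huv⟩ := Finset.one_lt_card.mp h2
  simp only [Finset.mem_filter] at hu hv
  exact ⟨u, v, huv, hu.2, hv.2⟩

section embedfacts
variable {n a k : ℕ} (e : Fin n ≃ Fin a ⊕ Fin k)

lemma mem_to_inr {B : Finset (Fin n)} (he_inl : ∀ i, e.symm (Sum.inl i) ∉ B)
    {v : Fin n} (hv : v ∈ B) : ∃ j, e v = Sum.inr j := by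
  cases hv' : e v with
  | inl i =>
    have : v = e.symm (Sum.inl i) := by rw [Equiv.eq_symm_apply, hv']
    rw [this] at hv
    exact absurd hv (he_inl i)
  | inr j => exact ⟨j, rfl⟩

lemma notmem_to_inl {B : Finset (Fin n)} (he_inr : ∀ j, e.symm (Sum.inr j) ∈ B)
    {v : Fin n} (hv : v ∉ B) : ∃ i, e v = Sum.inl i := by
  cases hv' : e v with
  | inr j =>
    have : v = e.symm (Sum.inr j) := by rw [Equiv.eq_symm_apply, hv']
    rw [this] at hv
    exact absurd (he_inr j) hv
  | inl i => exact ⟨i, rfl⟩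

lemma embedB_val (x : Fin n → Bool) (v : Fin n) :
    embedB e (fun i => x (e.symm (Sum.inl i))) v
      = Sum.elim (fun i => x (e.symm (Sum.inl i))) (fun _ => false) (e v) := rfl

lemma embedB_eq_of_zeroR (x : Fin n → Bool)
    (h0 : ∀ j, x (e.symm (Sum.inr j)) = false) :
    embedB e (fun i => x (e.symm (Sum.inl i))) = x := by
  funext v
  rw [embedB_val]
  cases hv : e v with
  | inl i =>
    have hvv : v = e.symm (Sum.inl i) := by rw [Equiv.eq_symm_apply, hv]
    show x (e.symm (Sum.inl i)) = x v
    rw [hvv]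
  | inr j =>
    have hvv : v = e.symm (Sum.inr j) := by rw [Equiv.eq_symm_apply, hv]
    show false = x v
    rw [hvv, h0 j]

lemma embedB_true_iff (x : Fin n → Bool) (v : Fin n) :
    embedB e (fun i => x (e.symm (Sum.inl i))) v = true ↔
      (∃ i, e v = Sum.inl i) ∧ x v = true := by
  rw [embedB_val]
  cases hv : e v with
  | inl i =>
    have hvv : v = e.symm (Sum.inl i) := by rw [Equiv.eq_symm_apply, hv]
    show x (e.symm (Sum.inl i)) = true ↔ _
    rw [← hvv]
    refine ⟨fun h => ⟨⟨i, rfl⟩, h⟩, fun h => h.2⟩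
  | inr w =>
    show false = true ↔ _
    constructor
    · intro h; exact absurd h (by simp)
    · rintro ⟨⟨i, hi⟩, _⟩
      exact nomatch hi

end embedfacts

theorem backward : ∀ n : ℕ, ∀ f : (Fin n → Bool) → ℂ, 1 ≤ n → Good f → InTC f := by
  intro n
  induction n using Nat.strong_induction_on with
  | _ n IH =>
  intro f hn hf
  classical
  obtain ⟨hf0, hB, hC⟩ := hf
  have hi0lt : 0 < n := hn
  set i₀ : Fin n := ⟨0, hi0lt⟩ with hi₀def
  by_cases hzz : f (pairVec i₀ i₀) = 0
  · -- peel a Δ₀ factor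
    set B : Finset (Fin n) := {i₀} with hBdef
    obtain ⟨e, he_inl, he_inr⟩ := finsetSplit B
    set F : (Fin (Bᶜ.card) → Bool) → ℂ := fun y => f (embedB e y) with hFdef
    set G : (Fin (B.card) → Bool) → ℂ := fun z => if wt1 z = 0 then (1:ℂ) else 0 with hGdef
    have hcardB : B.card = 1 := Finset.card_singleton i₀
    have hab : Bᶜ.card + B.card = n := by
      have h1 : B.card ≤ n := by simpa using Finset.card_le_univ B
      rw [Finset.card_compl, Fintype.card_fin]
      omega
    have hGTC : InTC G := by
      right
      refine ⟨1, one_ne_zero, 1, G, TensorOfS.atom (Or.inl ⟨hcardB, fun z => rfl⟩), ?_⟩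
      intro x
      rw [one_mul]
      congr 1
    have hFor : InTC F ∨ Bᶜ.card = 0 := by
      rcases Nat.eq_zero_or_pos (Bᶜ.card) with h0 | hpos
      · exact Or.inr h0
      · exact Or.inl (IH (Bᶜ.card) (by omega) F hpos (good_resF e ⟨hf0, hB, hC⟩))
    refine splitTC hab f e 1 one_ne_zero F G hFor hGTC ?_
    intro x
    set xL : Fin (Bᶜ.card) → Bool := fun i => x (e.symm (Sum.inl i)) with hxL
    set xR : Fin (B.card) → Bool := fun j => x (e.symm (Sum.inr j)) with hxR
    by_cases hR0 : wt1 xR = 0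
    · -- no ones inside B
      have hzR : ∀ j, x (e.symm (Sum.inr j)) = false := (wt1_eq_zero_iff xR).mp hR0
      have hyx : embedB e xL = x := embedB_eq_of_zeroR e x hzR
      have hGx : G xR = 1 := by
        show (if wt1 xR = 0 then (1:ℂ) else 0) = 1
        rw [if_pos hR0]
      rw [hGx]
      show f x = 1 * f (embedB e xL) * 1
      rw [hyx]
      ring
    · -- some one inside B, must be i₀, so f x = 0
      have hex : ∃ j, xR j = true := by
        by_contra hc
        push_neg at hc
        exact hR0 ((wt1_eq_zero_iff xR).mpr (fun j => by
          cases hj : xR j with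
          | false => rfl
          | true => exact absurd hj (hc j)))
      obtain ⟨j₀, hj₀⟩ := hex
      have hv₀ : e.symm (Sum.inr j₀) ∈ B := he_inr j₀
      have hv₀i : e.symm (Sum.inr j₀) = i₀ := by
        have hmem : e.symm (Sum.inr j₀) ∈ ({i₀} : Finset (Fin n)) := hv₀
        simpa using hmem
      have hxi₀ : x i₀ = true := by rw [← hv₀i]; exact hj₀
      have hnok : ¬ Ok f x := fun hok => (hok i₀ i₀ hxi₀ hxi₀) hzz
      have hfx : f x = 0 := by rw [hB x, if_neg hnok]
      have hGx : G xR = 0 := by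
        show (if wt1 xR = 0 then (1:ℂ) else 0) = 0
        rw [if_neg hR0]
      rw [hfx, hGx, mul_zero]
  · -- peel a g_k factor on the class of i₀
    set B : Finset (Fin n) :=
      insert i₀ (Finset.univ.filter fun j => f (pairVec j j) ≠ 0 ∧ f (pairVec i₀ j) = 0)
      with hBdef
    have hmemB : ∀ v, v ∈ B ↔ (v = i₀ ∨ (f (pairVec v v) ≠ 0 ∧ f (pairVec i₀ v) = 0)) := by
      intro v
      rw [hBdef]
      simp
    have hi₀B : i₀ ∈ B := by rw [hmemB]; exact Or.inl rfl
    have mem1 : ∀ u ∈ B, f (pairVec u u) ≠ 0 := by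
      intro u hu
      rcases (hmemB u).mp hu with rfl | ⟨h1, _⟩
      · exact hzz
      · exact h1
    have mem2 : ∀ u v, u ∈ B → v ∈ B → u ≠ v → f (pairVec u v) = 0 := by
      intro u v hu hv huv
      rcases (hmemB u).mp hu with rfl | ⟨hu1, hu2⟩
      · rcases (hmemB v).mp hv with rfl | ⟨hv1, hv2⟩
        · exact absurd rfl huv
        · exact hv2
      · rcases (hmemB v).mp hv with rfl | ⟨hv1, hv2⟩
        · rw [pairVec_comm]; exact hu2
        · exact hC u i₀ v huv hu1 hzz hv1 (by rw [pairVec_comm]; exact hu2) hv2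
    have mem3 : ∀ u, u ∉ B → f (pairVec u u) ≠ 0 → ∀ v ∈ B, f (pairVec u v) ≠ 0 := by
      intro u hu hsu v hv hz
      rcases (hmemB v).mp hv with rfl | ⟨hv1, hv2⟩
      · exact hu ((hmemB u).mpr (Or.inr ⟨hsu, by rw [pairVec_comm]; exact hz⟩))
      · have hui₀ : u ≠ i₀ := fun h => hu (h ▸ hi₀B)
        have : f (pairVec u i₀) = 0 :=
          hC u v i₀ hui₀ hsu hv1 hzz hz (by rw [pairVec_comm]; exact hv2)
        exact hu ((hmemB u).mpr (Or.inr ⟨hsu, by rw [pairVec_comm]; exact this⟩))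
    obtain ⟨e, he_inl, he_inr⟩ := finsetSplit B
    set F : (Fin (Bᶜ.card) → Bool) → ℂ := fun y => f (embedB e y) with hFdef
    set G : (Fin (B.card) → Bool) → ℂ :=
      fun z => if wt1 z = 0 then (2:ℂ) else if wt1 z = 1 then 1 else 0 with hGdef
    have hcardB : 1 ≤ B.card := Finset.card_pos.mpr ⟨i₀, hi₀B⟩
    have hab : Bᶜ.card + B.card = n := by
      have h1 : B.card ≤ n := by simpa using Finset.card_le_univ B
      rw [Finset.card_compl, Fintype.card_fin]
      omega
    have hGTC : InTC G := by
      right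
      refine ⟨1, one_ne_zero, 1, G, TensorOfS.atom (Or.inr ⟨hcardB, fun z => rfl⟩), ?_⟩
      intro x
      rw [one_mul]
      congr 1
    have hFor : InTC F ∨ Bᶜ.card = 0 := by
      rcases Nat.eq_zero_or_pos (Bᶜ.card) with h0 | hpos
      · exact Or.inr h0
      · exact Or.inl (IH (Bᶜ.card) (by omega) F hpos (good_resF e ⟨hf0, hB, hC⟩))
    refine splitTC hab f e ((2:ℂ)⁻¹) (by norm_num) F G hFor hGTC ?_
    intro x
    set xL : Fin (Bᶜ.card) → Bool := fun i => x (e.symm (Sum.inl i)) with hxL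
    set xR : Fin (B.card) → Bool := fun j => x (e.symm (Sum.inr j)) with hxR
    set y : Fin n → Bool := embedB e xL with hydef
    have hFxL : F xL = f y := rfl
    by_cases hR0 : wt1 xR = 0
    · have hzR : ∀ j, x (e.symm (Sum.inr j)) = false := (wt1_eq_zero_iff xR).mp hR0
      have hyx : y = x := embedB_eq_of_zeroR e x hzR
      have hGx : G xR = 2 := by
        show (if wt1 xR = 0 then (2:ℂ) else if wt1 xR = 1 then 1 else 0) = 2
        rw [if_pos hR0]
      rw [hGx, hFxL, hyx]
      ring
    by_cases hR1 : wt1 xR = 1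
    · -- exactly one variable of B is set to one
      obtain ⟨j₀, hj₀⟩ := wt1_eq_one_iff hR1
      set v₀ : Fin n := e.symm (Sum.inr j₀) with hv₀def
      have hv₀B : v₀ ∈ B := he_inr j₀
      have hxv₀ : x v₀ = true := (hj₀ j₀).mpr rfl
      have hxB : ∀ v ∈ B, (x v = true ↔ v = v₀) := by
        intro v hv
        obtain ⟨j, hj⟩ := mem_to_inr e he_inl hv
        have hvv : v = e.symm (Sum.inr j) := by rw [Equiv.eq_symm_apply, hj]
        constructor
        · intro hxv
          have : xR j = true := by rw [hxR]; show x (e.symm (Sum.inr j)) = true; rw [← hvv]; exact hxv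
          have hjj : j = j₀ := (hj₀ j).mp this
          rw [hvv, hjj]
        · intro hvveq
          rw [hvveq]
          exact hxv₀
      -- ones of y are exactly ones of x outside B
      have hyone : ∀ v, y v = true ↔ (v ∉ B ∧ x v = true) := by
        intro v
        rw [hydef]
        rw [embedB_true_iff e x v]
        constructor
        · rintro ⟨⟨i, hi⟩, hxv⟩
          refine ⟨?_, hxv⟩
          have : v = e.symm (Sum.inl i) := by rw [Equiv.eq_symm_apply, hi]
          rw [this]
          exact he_inl i
        · rintro ⟨hvB, hxv⟩
          exact ⟨notmem_to_inl e he_inr hvB, hxv⟩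
      have hOkiff : Ok f x ↔ Ok f y := by
        constructor
        · intro hok u v hu hv
          exact hok u v ((hyone u).mp hu).2 ((hyone v).mp hv).2
        · intro hok u v hu hv
          by_cases huB : u ∈ B
          · have hu₀ : u = v₀ := (hxB u huB).mp hu
            by_cases hvB : v ∈ B
            · have hv₀' : v = v₀ := (hxB v hvB).mp hv
              rw [hu₀, hv₀']
              exact mem1 v₀ hv₀B
            · have hyv : y v = true := (hyone v).mpr ⟨hvB, hv⟩
              have hsv : f (pairVec v v) ≠ 0 := hok v v hyv hyv
              rw [hu₀, pairVec_comm]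
              exact mem3 v hvB hsv v₀ hv₀B
          · by_cases hvB : v ∈ B
            · have hv₀' : v = v₀ := (hxB v hvB).mp hv
              have hyu : y u = true := (hyone u).mpr ⟨huB, hu⟩
              have hsu : f (pairVec u u) ≠ 0 := hok u u hyu hyu
              rw [hv₀']
              exact mem3 u huB hsu v₀ hv₀B
            · exact hok u v ((hyone u).mpr ⟨huB, hu⟩) ((hyone v).mpr ⟨hvB, hv⟩)
      have hwts : wt1 x = wt1 xL + 1 := by
        rw [wt1_split e x, hR1]
      have hwty : wt1 y = wt1 xL := by
        rw [hydef]
        exact wt1_embedB e xL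
      have hGx : G xR = 1 := by
        show (if wt1 xR = 0 then (2:ℂ) else if wt1 xR = 1 then 1 else 0) = 1
        rw [if_neg hR0, if_pos hR1]
      rw [hGx, hFxL, hB x, hB y, hwty, hwts]
      by_cases hok : Ok f x
      · rw [if_pos hok, if_pos (hOkiff.mp hok), pow_succ]
        ring
      · rw [if_neg hok, if_neg (fun h => hok (hOkiff.mpr h))]
        ring
    · -- at least two ones inside B : f x = 0 and G = 0
      obtain ⟨j₁, j₂, hj12, h1, h2⟩ := wt1_ge_two_pair hR0 hR1
      set v₁ : Fin n := e.symm (Sum.inr j₁) with hv₁def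
      set v₂ : Fin n := e.symm (Sum.inr j₂) with hv₂def
      have hv12 : v₁ ≠ v₂ := by
        intro h
        exact hj12 (Sum.inr_injective (e.symm.injective h))
      have hnok : ¬ Ok f x := by
        intro hok
        exact (hok v₁ v₂ h1 h2) (mem2 v₁ v₂ (he_inr j₁) (he_inr j₂) hv12)
      have hfx : f x = 0 := by rw [hB x, if_neg hnok]
      have hGx : G xR = 0 := by
        show (if wt1 xR = 0 then (2:ℂ) else if wt1 xR = 1 then 1 else 0) = 0
        rw [if_neg hR0, if_neg hR1]
      rw [hfx, hGx, mul_zero]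

lemma main_intc {m : ℕ} (hm : 3 ≤ m) (f : (Fin (m+1) → Bool) → ℂ)
    (hpin : ∀ (i : Fin (m+1)) (c : Bool), InTC (pinSig f i c)) : InTC f := by
  rcases main_good hm f hpin with h | h
  · exact Or.inl h
  · exact backward (m+1) f (by omega) h

lemma pinreach_trans {n : ℕ} {f : (Fin n → Bool) → ℂ} {m : ℕ} {g : (Fin m → Bool) → ℂ}
    {m' : ℕ} {g' : (Fin m' → Bool) → ℂ}
    (h1 : PinReach n f m g) (h2 : PinReach m g m' g') : PinReach n f m' g' := by
  induction h2 with
  | refl => exact h1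
  | pinStep h i c ih => exact PinReach.pinStep ih i c

/-- if `f ∉ ⟨S⟩`, then by successively pinning variables to
constants one obtains a signature `g` of arity at most `3` with `g ∉ ⟨S⟩`. -/
theorem stmt14 {n : ℕ} (f : (Fin n → Bool) → ℂ) (hf : ¬ InTC f) :
    ∃ (m : ℕ) (g : (Fin m → Bool) → ℂ), m ≤ 3 ∧ PinReach n f m g ∧ ¬ InTC g := by

  induction n using Nat.strong_induction_on with
  | _ n IH =>
  by_cases h3 : n ≤ 3
  · exact ⟨n, f, h3, PinReach.refl n f, hf⟩
  · push_neg at h3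
    obtain ⟨m, rfl⟩ : ∃ m, n = m + 1 := ⟨n - 1, by omega⟩
    have hm : 3 ≤ m := by omega
    have hex : ∃ (i : Fin (m+1)) (c : Bool), ¬ InTC (pinSig f i c) := by
      by_contra hc
      push_neg at hc
      exact hf (main_intc hm f hc)
    obtain ⟨i, c, hic⟩ := hex
    obtain ⟨m', g, hm3, hreach, hg⟩ := IH m (by omega) (pinSig f i c) hic
    exact ⟨m', g, hm3, pinreach_trans (PinReach.pinStep (PinReach.refl (m+1) f) i c) hreach, hg⟩
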